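/- (Olkin–Shepp first-order matrix bound, continuous case.) Let p be a probability density on ℝ positive exactly on the open interval S, and let X, X₁, X₂ be i.i.d. with density p. Let h : ℝ → ℝ be locally absolutely continuous with h'(x) > 0 for a.e. x ∈ S and E|h(X)| < ∞, and set Γ₁(x) = (1/p(x)) E[(h(X₂) − h(X₁)) · 1{X₁ ≤ x ≤ X₂}] for x ∈ S. Let f, g : ℝ → ℝ be locally absolutely continuous with E[f(X)²] < ∞, E[g(X)²] < ∞ and all entries of the matrix below finite. Then the 2×2 matrix E[ (Γ₁(X)/h'(X)) · [[f'(X)², f'(X) g'(X)], [f'(X) g'(X), g'(X)²]] ] − [[Var[f(X)], Cov[f(X), g(X)]], [Cov[f(X), g(X)], Var[g(X)]]] is positive semidefinite. -/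

import Mathlib

open MeasureTheory Set

/-- The probability measure on `ℝ` with Lebesgue density `p`. -/
noncomputable def dens (p : ℝ → ℝ) : Measure ℝ :=
  MeasureTheory.volume.withDensity fun x => ENNReal.ofReal (p x)

/-- `h` is locally absolutely continuous on `S` with a.e. derivative `h'`,
expressed through the fundamental theorem of calculus. -/
def LocAC (S : Set ℝ) (h h' : ℝ → ℝ) : Prop :=
  ∀ x ∈ S, ∀ y ∈ S, IntervalIntegrable h' MeasureTheory.volume x y ∧
    h y - h x = ∫ t in x..y, h' t

/-- The first-order Stein coefficient
`Γ₁(x) = (1/p(x)) E[(h(X₂) − h(X₁)) 1{X₁ ≤ x ≤ X₂}]` (for `X₁, X₂` i.i.d. ~ `p`). -/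
noncomputable def Gamma1 (p h : ℝ → ℝ) (x : ℝ) : ℝ :=
  (∫ q : ℝ × ℝ, (if q.1 ≤ x ∧ x ≤ q.2 then h q.2 - h q.1 else 0)
    ∂((dens p).prod (dens p))) / p x

lemma cs_pointwise (h' φ' : ℝ → ℝ) (hh'meas : Measurable h') (hφ'meas : Measurable φ')
    (x y : ℝ) (hxy : x ≤ y)
    (hh'pos : ∀ᵐ t ∂(volume.restrict (Icc x y)), 0 < h' t)
    (hφ'int : IntervalIntegrable φ' volume x y)
    (hh'int : IntervalIntegrable h' volume x y) :
    ENNReal.ofReal ((∫ t in x..y, φ' t) ^ 2)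
      ≤ ENNReal.ofReal (∫ t in x..y, h' t)
        * ∫⁻ t in Icc x y, ENNReal.ofReal (φ' t ^ 2 / h' t) := by
  set A := ∫⁻ t in Icc x y, ENNReal.ofReal (φ' t ^ 2 / h' t) with hA
  set B := ∫⁻ t in Icc x y, ENNReal.ofReal (h' t) with hB
  set C := ∫⁻ t in Icc x y, ENNReal.ofReal |φ' t| with hC
  have habs : IntegrableOn (fun t => |φ' t|) (Icc x y) volume := by
    rw [integrableOn_Icc_iff_integrableOn_Ioc]
    exact (hφ'int.1).norm
  have hd : ENNReal.ofReal |∫ t in x..y, φ' t| ≤ C := by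
    rw [intervalIntegral.integral_of_le hxy]
    calc ENNReal.ofReal |∫ t in Ioc x y, φ' t|
        ≤ ENNReal.ofReal (∫ t in Ioc x y, |φ' t|) := by
          apply ENNReal.ofReal_le_ofReal
          exact (norm_integral_le_integral_norm φ')
      _ ≤ ENNReal.ofReal (∫ t in Icc x y, |φ' t|) := by
          apply ENNReal.ofReal_le_ofReal
          rw [integral_Icc_eq_integral_Ioc]
      _ = C := by
          rw [hC, ofReal_integral_eq_lintegral_ofReal habs]
          exact Filter.Eventually.of_forall fun t => abs_nonneg _
  have hpq : (2:ℝ).HolderConjugate 2 := by constructor <;> norm_num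
  have hCS : C ≤ A ^ (1/2:ℝ) * B ^ (1/2:ℝ) := by
    have hmain := ENNReal.lintegral_mul_le_Lp_mul_Lq (volume.restrict (Icc x y)) hpq
      (f := fun t => ENNReal.ofReal (Real.sqrt (φ' t ^ 2 / h' t)))
      (g := fun t => ENNReal.ofReal (Real.sqrt (h' t)))
      ((hφ'meas.pow_const 2 |>.div hh'meas).sqrt.ennreal_ofReal.aemeasurable)
      (hh'meas.sqrt.ennreal_ofReal.aemeasurable)
    have e1 : C = ∫⁻ t in Icc x y, (fun t => ENNReal.ofReal (Real.sqrt (φ' t ^ 2 / h' t))) t *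
        (fun t => ENNReal.ofReal (Real.sqrt (h' t))) t := by
      apply lintegral_congr_ae
      filter_upwards [hh'pos] with t ht
      rw [← ENNReal.ofReal_mul (Real.sqrt_nonneg _), ← Real.sqrt_mul
        (div_nonneg (sq_nonneg _) ht.le), div_mul_cancel₀ _ ht.ne', Real.sqrt_sq_eq_abs]
    have e2 : ∫⁻ t in Icc x y, (fun t => ENNReal.ofReal (Real.sqrt (φ' t ^ 2 / h' t))) t ^ (2:ℝ)
        = A := by
      apply lintegral_congr_ae
      filter_upwards [hh'pos] with t ht
      rw [ENNReal.ofReal_rpow_of_nonneg (Real.sqrt_nonneg _) (by norm_num : (0:ℝ) ≤ 2)]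
      congr 1
      rw [show ((Real.sqrt (φ' t ^ 2 / h' t)) ^ (2:ℝ)) = (Real.sqrt (φ' t ^ 2 / h' t)) ^ (2:ℕ) by
        rw [← Real.rpow_natCast]; norm_num]
      exact Real.sq_sqrt (div_nonneg (sq_nonneg _) ht.le)
    have e3 : ∫⁻ t in Icc x y, (fun t => ENNReal.ofReal (Real.sqrt (h' t))) t ^ (2:ℝ) = B := by
      apply lintegral_congr_ae
      filter_upwards [hh'pos] with t ht
      rw [ENNReal.ofReal_rpow_of_nonneg (Real.sqrt_nonneg _) (by norm_num : (0:ℝ) ≤ 2)]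
      congr 1
      rw [show ((Real.sqrt (h' t)) ^ (2:ℝ)) = (Real.sqrt (h' t)) ^ (2:ℕ) by
        rw [← Real.rpow_natCast]; norm_num]
      exact Real.sq_sqrt ht.le
    calc C = _ := e1
      _ ≤ _ := hmain
      _ = A ^ (1/2:ℝ) * B ^ (1/2:ℝ) := by rw [e2, e3]
  have hBe : B = ENNReal.ofReal (∫ t in x..y, h' t) := by
    rw [hB, intervalIntegral.integral_of_le hxy, ← integral_Icc_eq_integral_Ioc,
      ofReal_integral_eq_lintegral_ofReal]
    · exact (integrableOn_Icc_iff_integrableOn_Ioc).mpr hh'int.1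
    · filter_upwards [hh'pos] with t ht; exact ht.le
  -- combine
  have key : ENNReal.ofReal ((∫ t in x..y, φ' t) ^ 2) ≤ A * B := by
    have h1 : ENNReal.ofReal ((∫ t in x..y, φ' t) ^ 2)
        = (ENNReal.ofReal |∫ t in x..y, φ' t|) ^ (2:ℝ) := by
      rw [ENNReal.ofReal_rpow_of_nonneg (abs_nonneg _) (by norm_num)]
      congr 1
      rw [show (|∫ t in x..y, φ' t| ^ (2:ℝ)) = |∫ t in x..y, φ' t| ^ (2:ℕ) by
        rw [← Real.rpow_natCast]; norm_num]
      exact (sq_abs _).symm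
    rw [h1]
    calc (ENNReal.ofReal |∫ t in x..y, φ' t|) ^ (2:ℝ)
        ≤ C ^ (2:ℝ) := ENNReal.rpow_le_rpow hd (by norm_num)
      _ ≤ (A ^ (1/2:ℝ) * B ^ (1/2:ℝ)) ^ (2:ℝ) := ENNReal.rpow_le_rpow hCS (by norm_num)
      _ = A * B := by
          rw [ENNReal.mul_rpow_of_nonneg _ _ (by norm_num : (0:ℝ) ≤ 2),
            ← ENNReal.rpow_mul, ← ENNReal.rpow_mul]
          norm_num
  rw [hBe] at key
  calc ENNReal.ofReal ((∫ t in x..y, φ' t) ^ 2) ≤ A * ENNReal.ofReal (∫ t in x..y, h' t) := key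
    _ = _ := mul_comm _ _

lemma scalar_bound
    (p : ℝ → ℝ) (S : Set ℝ) (hSopen : IsOpen S) (hSconn : S.OrdConnected)
    (hpmeas : Measurable p) (hp0 : ∀ x, 0 ≤ p x)
    (hppos : ∀ x : ℝ, 0 < p x ↔ x ∈ S)
    (hp1 : ∫ x, p x = 1)
    (h h' : ℝ → ℝ) (hhmeas : Measurable h) (hh'meas : Measurable h')
    (hACh : LocAC S h h')
    (hh'pos : ∀ᵐ x ∂(volume.restrict S), 0 < h' x)
    (hhint : Integrable h (dens p))
    (φ φ' : ℝ → ℝ) (hφmeas : Measurable φ) (hφ'meas : Measurable φ')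
    (hACφ : LocAC S φ φ')
    (hφ2 : Integrable (fun x => φ x ^ 2) (dens p))
    (hE : Integrable (fun x => Gamma1 p h x / h' x * (φ' x ^ 2)) (dens p)) :
    (∫ x, φ x ^ 2 ∂(dens p)) - (∫ x, φ x ∂(dens p)) ^ 2
      ≤ ∫ x, Gamma1 p h x / h' x * (φ' x ^ 2) ∂(dens p) := by
  have hpint : Integrable p volume := by
    by_contra hc; rw [integral_undef hc] at hp1; norm_num at hp1
  have hprob : IsProbabilityMeasure (dens p) := by
    constructor
    rw [dens, withDensity_apply _ MeasurableSet.univ, Measure.restrict_univ,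
      ← ofReal_integral_eq_lintegral_ofReal hpint (Filter.Eventually.of_forall hp0), hp1]
    simp
  have hac : dens p ≪ volume := withDensity_absolutelyContinuous _ _
  have hpS : ∀ x, x ∉ S → p x = 0 := by
    intro x hx
    by_contra hc
    exact hx ((hppos x).mp (lt_of_le_of_ne (hp0 x) (Ne.symm hc)))
  have hSc : dens p Sᶜ = 0 := by
    rw [dens, withDensity_apply _ hSopen.measurableSet.compl,
      setLIntegral_congr_fun hSopen.measurableSet.compl
      (fun x hx => by rw [hpS x hx, ENNReal.ofReal_zero])]
    simp
  have hμS : ∀ᵐ x ∂(dens p), x ∈ S := by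
    rw [ae_iff]
    convert hSc using 2
    rfl
  have hνSS : ∀ᵐ z : ℝ × ℝ ∂((dens p).prod (dens p)), z.1 ∈ S ∧ z.2 ∈ S := by
    have hnull : ((dens p).prod (dens p)) ((S ×ˢ S)ᶜ) = 0 := by
      rw [Set.compl_prod_eq_union]
      refine measure_union_null ?_ ?_ <;> rw [Measure.prod_prod] <;> simp [hSc]
    rw [ae_iff]
    convert hnull using 2
    rfl
  -- K facts
  have hsetmeas : ∀ t : ℝ, MeasurableSet {z : ℝ × ℝ | z.1 ≤ t ∧ t ≤ z.2} := fun t =>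
    (measurableSet_le measurable_fst measurable_const).inter
      (measurableSet_le measurable_const measurable_snd)
  have hKmeas : ∀ t : ℝ, Measurable
      (fun z : ℝ × ℝ => if z.1 ≤ t ∧ t ≤ z.2 then h z.2 - h z.1 else 0) := fun t =>
    Measurable.ite (hsetmeas t)
      ((hhmeas.comp measurable_snd).sub (hhmeas.comp measurable_fst)) measurable_const
  have hK : ∀ t : ℝ, Integrable
      (fun z : ℝ × ℝ => if z.1 ≤ t ∧ t ≤ z.2 then h z.2 - h z.1 else 0)
      ((dens p).prod (dens p)) := by
    intro t
    have h1 : Integrable (fun z : ℝ × ℝ => |h z.1| * 1) ((dens p).prod (dens p)) :=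
      (hhint.abs).mul_prod (integrable_const 1)
    have h2 : Integrable (fun z : ℝ × ℝ => 1 * |h z.2|) ((dens p).prod (dens p)) :=
      (integrable_const 1).mul_prod (hhint.abs)
    refine (h1.add h2).mono' (hKmeas t).aestronglyMeasurable ?_
    refine Filter.Eventually.of_forall fun z => ?_
    simp only [Real.norm_eq_abs, Pi.add_apply, mul_one, one_mul]
    by_cases hz : z.1 ≤ t ∧ t ≤ z.2
    · simp only [hz, if_true]
      calc |h z.2 - h z.1| ≤ |h z.2| + |h z.1| := abs_sub _ _
        _ = |h z.1| + |h z.2| := add_comm _ _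
    · simp only [hz, if_false, abs_zero]
      positivity
  have hKnn : ∀ t : ℝ, 0 ≤ᵐ[(dens p).prod (dens p)]
      (fun z : ℝ × ℝ => if z.1 ≤ t ∧ t ≤ z.2 then h z.2 - h z.1 else 0) := by
    intro t
    filter_upwards [hνSS] with z hz
    by_cases hc : z.1 ≤ t ∧ t ≤ z.2
    · simp only [hc, if_true, Pi.zero_apply]
      rw [(hACh z.1 hz.1 z.2 hz.2).2]
      apply intervalIntegral.integral_nonneg_of_ae_restrict (hc.1.trans hc.2)
      have hsub : Icc z.1 z.2 ⊆ S := hSconn.out hz.1 hz.2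
      filter_upwards [ae_restrict_of_ae_restrict_of_subset hsub hh'pos] with u hu using hu.le
    · simp [hc]
  have hGnn : ∀ t ∈ S, 0 ≤ Gamma1 p h t := fun t ht =>
    div_nonneg (integral_nonneg_of_ae (hKnn t)) (hp0 t)
  have hGmul : ∀ t ∈ S, (∫ z : ℝ × ℝ, (if z.1 ≤ t ∧ t ≤ z.2 then h z.2 - h z.1 else 0)
      ∂((dens p).prod (dens p))) = Gamma1 p h t * p t := by
    intro t ht
    rw [Gamma1, div_mul_cancel₀]
    exact ((hppos t).mpr ht).ne'
  have hGzero : ∀ t, t ∉ S → (∫ z : ℝ × ℝ, (if z.1 ≤ t ∧ t ≤ z.2 then h z.2 - h z.1 else 0)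
      ∂((dens p).prod (dens p))) = 0 := by
    intro t ht
    rw [integral_eq_zero_of_ae]
    filter_upwards [hνSS] with z hz
    by_cases hc : z.1 ≤ t ∧ t ≤ z.2
    · exact absurd (hSconn.out hz.1 hz.2 ⟨hc.1, hc.2⟩) ht
    · simp [hc]
  -- φ integrable
  have hφint : Integrable φ (dens p) := by
    refine (hφ2.add (integrable_const 1)).mono' hφmeas.aestronglyMeasurable ?_
    refine Filter.Eventually.of_forall fun x => ?_
    simp only [Real.norm_eq_abs, Pi.add_apply]
    nlinarith [sq_nonneg (|φ x| - 1), sq_abs (φ x), abs_nonneg (φ x)]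
  -- expansion of the symmetric square integral
  have hisq1 : Integrable (fun z : ℝ × ℝ => φ z.1 ^ 2 * 1) ((dens p).prod (dens p)) :=
    hφ2.mul_prod (integrable_const 1)
  have hisq2 : Integrable (fun z : ℝ × ℝ => 1 * φ z.2 ^ 2) ((dens p).prod (dens p)) :=
    (integrable_const 1).mul_prod hφ2
  have hGeq : (fun z : ℝ × ℝ => (φ z.2 - φ z.1) ^ 2)
      = fun z : ℝ × ℝ => φ z.1 ^ 2 * 1 + 1 * φ z.2 ^ 2 - 2 * (φ z.1 * φ z.2) := by
    funext z; ring
  have hG : Integrable (fun z : ℝ × ℝ => (φ z.2 - φ z.1) ^ 2) ((dens p).prod (dens p)) := by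
    rw [hGeq]
    exact (hisq1.add hisq2).sub ((hφint.mul_prod hφint).const_mul 2)
  have hJint : ∫ z : ℝ × ℝ, (φ z.2 - φ z.1) ^ 2 ∂((dens p).prod (dens p))
      = 2 * (∫ x, φ x ^ 2 ∂(dens p)) - 2 * (∫ x, φ x ∂(dens p)) ^ 2 := by
    have hadd : Integrable (fun z : ℝ × ℝ => φ z.1 ^ 2 * 1 + 1 * φ z.2 ^ 2)
        ((dens p).prod (dens p)) := hisq1.add hisq2
    have hmul2 : Integrable (fun z : ℝ × ℝ => 2 * (φ z.1 * φ z.2)) ((dens p).prod (dens p)) :=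
      (hφint.mul_prod hφint).const_mul 2
    rw [hGeq, integral_sub hadd hmul2,
      integral_add hisq1 hisq2,
      integral_prod_mul (f := fun x : ℝ => φ x ^ 2) (g := fun _ : ℝ => (1:ℝ)),
      integral_prod_mul (f := fun _ : ℝ => (1:ℝ)) (g := fun x : ℝ => φ x ^ 2),
      integral_const_mul, integral_prod_mul (f := φ) (g := φ)]
    simp only [integral_const, measure_univ, probReal_univ, ENNReal.toReal_one, smul_eq_mul, one_mul, mul_one]
    ring
  -- symmetrization: restrict to the half plane
  have hmeasG : Measurable (fun z : ℝ × ℝ => (φ z.2 - φ z.1) ^ 2) :=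
    (((hφmeas.comp measurable_snd).sub (hφmeas.comp measurable_fst)).pow_const 2)
  have hsetle : MeasurableSet {z : ℝ × ℝ | z.1 ≤ z.2} :=
    measurableSet_le measurable_fst measurable_snd
  have hsetlt : MeasurableSet {z : ℝ × ℝ | z.1 < z.2} :=
    measurableSet_lt measurable_fst measurable_snd
  have hsetgt : MeasurableSet {z : ℝ × ℝ | z.2 < z.1} :=
    measurableSet_lt measurable_snd measurable_fst
  have hle : Integrable (fun z : ℝ × ℝ => if z.1 ≤ z.2 then (φ z.2 - φ z.1) ^ 2 else 0)
      ((dens p).prod (dens p)) := hG.indicator hsetle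
  have hlt : Integrable (fun z : ℝ × ℝ => if z.1 < z.2 then (φ z.2 - φ z.1) ^ 2 else 0)
      ((dens p).prod (dens p)) := hG.indicator hsetlt
  have hgt : Integrable (fun z : ℝ × ℝ => if z.2 < z.1 then (φ z.2 - φ z.1) ^ 2 else 0)
      ((dens p).prod (dens p)) := hG.indicator hsetgt
  have hswap : ∫ z : ℝ × ℝ, (if z.2 < z.1 then (φ z.2 - φ z.1) ^ 2 else 0)
        ∂((dens p).prod (dens p))
      = ∫ z : ℝ × ℝ, (if z.1 < z.2 then (φ z.2 - φ z.1) ^ 2 else 0)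
        ∂((dens p).prod (dens p)) := by
    have hmsw : Measure.map Prod.swap ((dens p).prod (dens p)) = (dens p).prod (dens p) :=
      Measure.prod_swap
    have hmeasF : Measurable (fun z : ℝ × ℝ => if z.2 < z.1 then (φ z.2 - φ z.1) ^ 2 else 0) :=
      Measurable.ite hsetgt hmeasG measurable_const
    conv_lhs => rw [← hmsw]
    rw [integral_map measurable_swap.aemeasurable
      (by rw [hmsw]; exact hmeasF.aestronglyMeasurable)]
    apply integral_congr_ae
    refine Filter.Eventually.of_forall fun z => ?_
    simp only [Function.comp, Prod.snd_swap, Prod.fst_swap]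
    by_cases hc : z.1 < z.2
    · simp only [hc, if_true]; ring
    · simp [hc]
  have hpart : ∫ z : ℝ × ℝ, (φ z.2 - φ z.1) ^ 2 ∂((dens p).prod (dens p))
      ≤ 2 * ∫ z : ℝ × ℝ, (if z.1 ≤ z.2 then (φ z.2 - φ z.1) ^ 2 else 0)
        ∂((dens p).prod (dens p)) := by
    have hsplit : ∫ z : ℝ × ℝ, (φ z.2 - φ z.1) ^ 2 ∂((dens p).prod (dens p))
        = (∫ z : ℝ × ℝ, (if z.1 ≤ z.2 then (φ z.2 - φ z.1) ^ 2 else 0)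
            ∂((dens p).prod (dens p)))
          + ∫ z : ℝ × ℝ, (if z.2 < z.1 then (φ z.2 - φ z.1) ^ 2 else 0)
            ∂((dens p).prod (dens p)) := by
      rw [← integral_add hle hgt]
      apply integral_congr_ae
      refine Filter.Eventually.of_forall fun z => ?_
      by_cases hc : z.1 ≤ z.2
      · simp [hc, not_lt.mpr hc]
      · simp [hc, lt_of_not_ge hc]
    have hmono : ∫ z : ℝ × ℝ, (if z.1 < z.2 then (φ z.2 - φ z.1) ^ 2 else 0)
          ∂((dens p).prod (dens p))
        ≤ ∫ z : ℝ × ℝ, (if z.1 ≤ z.2 then (φ z.2 - φ z.1) ^ 2 else 0)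
          ∂((dens p).prod (dens p)) := by
      apply integral_mono hlt hle
      intro z
      by_cases hc : z.1 < z.2
      · simp [hc, hc.le]
      · simp only [hc, if_false]
        by_cases hc2 : z.1 ≤ z.2 <;> simp [hc2, sq_nonneg]
    rw [hsplit, hswap]
    linarith
  -- Var ≤ I2
  have hVarI2 : (∫ x, φ x ^ 2 ∂(dens p)) - (∫ x, φ x ∂(dens p)) ^ 2
      ≤ ∫ z : ℝ × ℝ, (if z.1 ≤ z.2 then (φ z.2 - φ z.1) ^ 2 else 0)
        ∂((dens p).prod (dens p)) := by
    rw [hJint] at hpart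
    linarith
  -- ENNReal chain
  have hI2A : ENNReal.ofReal (∫ z : ℝ × ℝ, (if z.1 ≤ z.2 then (φ z.2 - φ z.1) ^ 2 else 0)
        ∂((dens p).prod (dens p)))
      = ∫⁻ z : ℝ × ℝ, (if z.1 ≤ z.2 then ENNReal.ofReal ((φ z.2 - φ z.1) ^ 2) else 0)
        ∂((dens p).prod (dens p)) := by
    rw [ofReal_integral_eq_lintegral_ofReal hle (Filter.Eventually.of_forall fun z => by
      by_cases hc : z.1 ≤ z.2 <;> simp [hc, sq_nonneg])]
    apply lintegral_congr fun z => ?_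
    by_cases hc : z.1 ≤ z.2 <;> simp [hc]
  have hAW : (∫⁻ z : ℝ × ℝ, (if z.1 ≤ z.2 then ENNReal.ofReal ((φ z.2 - φ z.1) ^ 2) else 0)
        ∂((dens p).prod (dens p)))
      ≤ ∫⁻ z : ℝ × ℝ, (∫⁻ t, (if z.1 ≤ t ∧ t ≤ z.2 then ENNReal.ofReal (h z.2 - h z.1) else 0)
          * ENNReal.ofReal (φ' t ^ 2 / h' t) ∂volume) ∂((dens p).prod (dens p)) := by
    apply lintegral_mono_ae
    filter_upwards [hνSS] with z hz
    by_cases hc : z.1 ≤ z.2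
    · simp only [hc, if_true]
      have hIccS : Icc z.1 z.2 ⊆ S := hSconn.out hz.1 hz.2
      have hcs := cs_pointwise h' φ' hh'meas hφ'meas z.1 z.2 hc
        (ae_restrict_of_ae_restrict_of_subset hIccS hh'pos)
        (hACφ z.1 hz.1 z.2 hz.2).1 (hACh z.1 hz.1 z.2 hz.2).1
      rw [← (hACφ z.1 hz.1 z.2 hz.2).2, ← (hACh z.1 hz.1 z.2 hz.2).2] at hcs
      refine le_trans hcs (le_of_eq ?_)
      rw [← lintegral_const_mul (f := fun t => ENNReal.ofReal (φ' t ^ 2 / h' t)) _ ((hφ'meas.pow_const 2).div hh'meas).ennreal_ofReal,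
        ← lintegral_indicator measurableSet_Icc]
      apply lintegral_congr fun t => ?_
      rw [Set.indicator_apply]
      by_cases hm : t ∈ Icc z.1 z.2
      · rw [if_pos hm, if_pos (mem_Icc.mp hm)]
      · rw [if_neg hm, if_neg (fun hx => hm (mem_Icc.mpr hx)), zero_mul]
    · simp [hc]
  have hswapL : (∫⁻ z : ℝ × ℝ, (∫⁻ t, (if z.1 ≤ t ∧ t ≤ z.2
          then ENNReal.ofReal (h z.2 - h z.1) else 0)
          * ENNReal.ofReal (φ' t ^ 2 / h' t) ∂volume) ∂((dens p).prod (dens p)))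
      = ∫⁻ t, (∫⁻ z : ℝ × ℝ, (if z.1 ≤ t ∧ t ≤ z.2
          then ENNReal.ofReal (h z.2 - h z.1) else 0)
          * ENNReal.ofReal (φ' t ^ 2 / h' t) ∂((dens p).prod (dens p))) ∂volume := by
    apply lintegral_lintegral_swap
    apply Measurable.aemeasurable
    refine Measurable.mul ?_ ?_
    · refine Measurable.ite ?_ ?_ measurable_const
      · exact (measurableSet_le measurable_fst.fst measurable_snd).inter
          (measurableSet_le measurable_snd measurable_fst.snd)
      · exact ((hhmeas.comp measurable_fst.snd).sub
          (hhmeas.comp measurable_fst.fst)).ennreal_ofReal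
    · exact (((hφ'meas.comp measurable_snd).pow_const 2).div
        (hh'meas.comp measurable_snd)).ennreal_ofReal
  have hInner : ∀ t : ℝ, (∫⁻ z : ℝ × ℝ, (if z.1 ≤ t ∧ t ≤ z.2
          then ENNReal.ofReal (h z.2 - h z.1) else 0)
          * ENNReal.ofReal (φ' t ^ 2 / h' t) ∂((dens p).prod (dens p)))
      = ENNReal.ofReal (∫ z : ℝ × ℝ, (if z.1 ≤ t ∧ t ≤ z.2 then h z.2 - h z.1 else 0)
          ∂((dens p).prod (dens p))) * ENNReal.ofReal (φ' t ^ 2 / h' t) := by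
    intro t
    have hm : Measurable (fun z : ℝ × ℝ =>
        if z.1 ≤ t ∧ t ≤ z.2 then ENNReal.ofReal (h z.2 - h z.1) else 0) := by
      refine Measurable.ite (hsetmeas t) ?_ measurable_const
      exact ((hhmeas.comp measurable_snd).sub (hhmeas.comp measurable_fst)).ennreal_ofReal
    rw [lintegral_mul_const _ hm]
    congr 1
    rw [ofReal_integral_eq_lintegral_ofReal (hK t) (hKnn t)]
    apply lintegral_congr fun z => ?_
    by_cases hc : z.1 ≤ t ∧ t ≤ z.2 <;> simp [hc]
  -- Gamma1 measurability
  have hGamma_meas : Measurable (Gamma1 p h) := by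
    apply Measurable.div ?_ hpmeas
    have hsm : StronglyMeasurable (fun q : ℝ × (ℝ × ℝ) =>
        if q.2.1 ≤ q.1 ∧ q.1 ≤ q.2.2 then h q.2.2 - h q.2.1 else 0) := by
      apply Measurable.stronglyMeasurable
      refine Measurable.ite ?_ ?_ measurable_const
      · exact (measurableSet_le measurable_snd.fst measurable_fst).inter
          (measurableSet_le measurable_fst measurable_snd.snd)
      · exact ((hhmeas.comp measurable_snd.snd).sub (hhmeas.comp measurable_snd.fst))
    exact hsm.integral_prod_right'.measurable
  have hh'posae : ∀ᵐ t : ℝ ∂volume, t ∈ S → 0 < h' t :=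
    (ae_restrict_iff' hSopen.measurableSet).mp hh'pos
  have hμnn : ∀ᵐ x ∂(dens p), 0 ≤ Gamma1 p h x / h' x * φ' x ^ 2 := by
    filter_upwards [hμS, hac.ae_le hh'posae] with x hx hx'
    have h1 : 0 < h' x := hx' hx
    have h2 : 0 ≤ Gamma1 p h x := hGnn x hx
    positivity
  have hRHSnn : 0 ≤ ∫ x, Gamma1 p h x / h' x * φ' x ^ 2 ∂(dens p) :=
    integral_nonneg_of_ae hμnn
  -- final rewriting of the t-integral
  have hFinal : (∫⁻ t, (ENNReal.ofReal (∫ z : ℝ × ℝ,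
          (if z.1 ≤ t ∧ t ≤ z.2 then h z.2 - h z.1 else 0) ∂((dens p).prod (dens p))))
          * ENNReal.ofReal (φ' t ^ 2 / h' t) ∂volume)
      = ∫⁻ t, ENNReal.ofReal (p t) * ENNReal.ofReal (Gamma1 p h t / h' t * φ' t ^ 2)
          ∂volume := by
    apply lintegral_congr_ae
    filter_upwards [hh'posae] with t ht
    by_cases htS : t ∈ S
    · have hh't : 0 < h' t := ht htS
      rw [hGmul t htS,
        ← ENNReal.ofReal_mul (mul_nonneg (hGnn t htS) (hp0 t)),
        ← ENNReal.ofReal_mul (hp0 t)]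
      congr 1
      field_simp
    · rw [hGzero t htS, hpS t htS]
      simp
  have hWD : (∫⁻ t, ENNReal.ofReal (p t)
        * ENNReal.ofReal (Gamma1 p h t / h' t * φ' t ^ 2) ∂volume)
      = ∫⁻ x, ENNReal.ofReal (Gamma1 p h x / h' x * φ' x ^ 2) ∂(dens p) := by
    rw [dens, lintegral_withDensity_eq_lintegral_mul volume hpmeas.ennreal_ofReal]
    · rfl
    · exact ((hGamma_meas.div hh'meas).mul (hφ'meas.pow_const 2)).ennreal_ofReal
  have hRHSofReal : (∫⁻ x, ENNReal.ofReal (Gamma1 p h x / h' x * φ' x ^ 2) ∂(dens p))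
      = ENNReal.ofReal (∫ x, Gamma1 p h x / h' x * φ' x ^ 2 ∂(dens p)) :=
    (ofReal_integral_eq_lintegral_ofReal hE hμnn).symm
  -- assemble
  have hchain : ENNReal.ofReal (∫ z : ℝ × ℝ,
        (if z.1 ≤ z.2 then (φ z.2 - φ z.1) ^ 2 else 0) ∂((dens p).prod (dens p)))
      ≤ ENNReal.ofReal (∫ x, Gamma1 p h x / h' x * φ' x ^ 2 ∂(dens p)) := by
    rw [hI2A, ← hRHSofReal, ← hWD, ← hFinal]
    refine le_trans hAW (le_of_eq ?_)
    rw [hswapL]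
    exact lintegral_congr fun t => hInner t
  have hI2RHS := (ENNReal.ofReal_le_ofReal_iff hRHSnn).mp hchain
  linarith

/-- Olkin–Shepp first-order matrix bound, continuous case: the matrix
`E[(Γ₁(X)/h'(X)) [[f'², f'g'],[f'g', g'²]]] − [[Var f, Cov(f,g)],[Cov(f,g), Var g]]`
is positive semidefinite. -/
theorem olkin_shepp_first_order_continuous
    (p : ℝ → ℝ) (S : Set ℝ) (hSopen : IsOpen S) (hSconn : S.OrdConnected)
    (hpmeas : Measurable p) (hp0 : ∀ x, 0 ≤ p x)
    (hppos : ∀ x : ℝ, 0 < p x ↔ x ∈ S)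
    (hp1 : ∫ x, p x = 1)
    (h h' : ℝ → ℝ) (hhmeas : Measurable h) (hh'meas : Measurable h')
    (hACh : LocAC S h h')
    (hh'pos : ∀ᵐ x ∂(volume.restrict S), 0 < h' x)
    (hhint : Integrable h (dens p))
    (f f' g g' : ℝ → ℝ)
    (hfmeas : Measurable f) (hf'meas : Measurable f')
    (hgmeas : Measurable g) (hg'meas : Measurable g')
    (hACf : LocAC S f f') (hACg : LocAC S g g')
    (hf2 : Integrable (fun x => f x ^ 2) (dens p))
    (hg2 : Integrable (fun x => g x ^ 2) (dens p))
    (hE11 : Integrable (fun x => Gamma1 p h x / h' x * (f' x ^ 2)) (dens p))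
    (hE12 : Integrable (fun x => Gamma1 p h x / h' x * (f' x * g' x)) (dens p))
    (hE22 : Integrable (fun x => Gamma1 p h x / h' x * (g' x ^ 2)) (dens p)) :
    ((!![∫ x, Gamma1 p h x / h' x * (f' x ^ 2) ∂(dens p),
           ∫ x, Gamma1 p h x / h' x * (f' x * g' x) ∂(dens p);
         ∫ x, Gamma1 p h x / h' x * (f' x * g' x) ∂(dens p),
           ∫ x, Gamma1 p h x / h' x * (g' x ^ 2) ∂(dens p)] : Matrix (Fin 2) (Fin 2) ℝ) -
      (!![(∫ x, f x ^ 2 ∂(dens p)) - (∫ x, f x ∂(dens p)) ^ 2,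
            (∫ x, f x * g x ∂(dens p)) - (∫ x, f x ∂(dens p)) * (∫ x, g x ∂(dens p));
          (∫ x, f x * g x ∂(dens p)) - (∫ x, f x ∂(dens p)) * (∫ x, g x ∂(dens p)),
            (∫ x, g x ^ 2 ∂(dens p)) - (∫ x, g x ∂(dens p)) ^ 2] :
        Matrix (Fin 2) (Fin 2) ℝ)).PosSemidef := by
  have hpint : Integrable p volume := by
    by_contra hc; rw [integral_undef hc] at hp1; norm_num at hp1
  have hprob : IsProbabilityMeasure (dens p) := by
    constructor
    rw [dens, withDensity_apply _ MeasurableSet.univ, Measure.restrict_univ,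
      ← ofReal_integral_eq_lintegral_ofReal hpint (Filter.Eventually.of_forall hp0), hp1]
    simp
  -- integrability preliminaries
  have hL1 : ∀ (u : ℝ → ℝ), Measurable u → Integrable (fun x => u x ^ 2) (dens p) →
      Integrable u (dens p) := by
    intro u hum hu2
    refine (hu2.add (integrable_const 1)).mono' hum.aestronglyMeasurable ?_
    refine Filter.Eventually.of_forall fun x => ?_
    simp only [Real.norm_eq_abs, Pi.add_apply]
    nlinarith [sq_nonneg (|u x| - 1), sq_abs (u x), abs_nonneg (u x)]
  have hfint : Integrable f (dens p) := hL1 f hfmeas hf2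
  have hgint : Integrable g (dens p) := hL1 g hgmeas hg2
  have hfg : Integrable (fun x => f x * g x) (dens p) := by
    refine (hf2.add hg2).mono' (hfmeas.mul hgmeas).aestronglyMeasurable ?_
    refine Filter.Eventually.of_forall fun x => ?_
    simp only [Real.norm_eq_abs, Pi.add_apply, abs_mul]
    nlinarith [sq_nonneg (|f x| - |g x|), sq_abs (f x), sq_abs (g x),
      abs_nonneg (f x), abs_nonneg (g x)]
  -- the key scalar inequality for an arbitrary linear combination
  have key : ∀ a b : ℝ,
      (a ^ 2 * (∫ x, f x ^ 2 ∂(dens p)) + 2 * (a * b) * (∫ x, f x * g x ∂(dens p))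
        + b ^ 2 * (∫ x, g x ^ 2 ∂(dens p)))
      - (a * (∫ x, f x ∂(dens p)) + b * (∫ x, g x ∂(dens p))) ^ 2
      ≤ a ^ 2 * (∫ x, Gamma1 p h x / h' x * (f' x ^ 2) ∂(dens p))
        + 2 * (a * b) * (∫ x, Gamma1 p h x / h' x * (f' x * g' x) ∂(dens p))
        + b ^ 2 * (∫ x, Gamma1 p h x / h' x * (g' x ^ 2) ∂(dens p)) := by
    intro a b
    set φ : ℝ → ℝ := fun x => a * f x + b * g x with hφdef
    set φ' : ℝ → ℝ := fun x => a * f' x + b * g' x with hφ'def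
    have hφmeas : Measurable φ := (hfmeas.const_mul a).add (hgmeas.const_mul b)
    have hφ'meas : Measurable φ' := (hf'meas.const_mul a).add (hg'meas.const_mul b)
    have hACφ : LocAC S φ φ' := by
      intro x hx y hy
      have hf' := hACf x hx y hy
      have hg' := hACg x hx y hy
      have hif : IntervalIntegrable (fun t => a * f' t) volume x y := hf'.1.const_mul a
      have hig : IntervalIntegrable (fun t => b * g' t) volume x y := hg'.1.const_mul b
      refine ⟨hif.add hig, ?_⟩
      rw [hφ'def]
      rw [intervalIntegral.integral_add hif hig, intervalIntegral.integral_const_mul,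
        intervalIntegral.integral_const_mul, ← hf'.2, ← hg'.2]
      simp only [hφdef]
      ring
    have hφ2eq : (fun x => φ x ^ 2)
        = fun x => a ^ 2 * f x ^ 2 + 2 * (a * b) * (f x * g x) + b ^ 2 * g x ^ 2 := by
      funext x; simp only [hφdef]; ring
    have hφ2 : Integrable (fun x => φ x ^ 2) (dens p) := by
      rw [hφ2eq]
      exact ((hf2.const_mul _).add (hfg.const_mul _)).add (hg2.const_mul _)
    have hEφeq : (fun x => Gamma1 p h x / h' x * (φ' x ^ 2))
        = fun x => a ^ 2 * (Gamma1 p h x / h' x * (f' x ^ 2))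
          + 2 * (a * b) * (Gamma1 p h x / h' x * (f' x * g' x))
          + b ^ 2 * (Gamma1 p h x / h' x * (g' x ^ 2)) := by
      funext x; simp only [hφ'def]; ring
    have hEφ : Integrable (fun x => Gamma1 p h x / h' x * (φ' x ^ 2)) (dens p) := by
      rw [hEφeq]
      exact ((hE11.const_mul _).add (hE12.const_mul _)).add (hE22.const_mul _)
    have hmain := scalar_bound p S hSopen hSconn hpmeas hp0 hppos hp1 h h' hhmeas hh'meas
      hACh hh'pos hhint φ φ' hφmeas hφ'meas hACφ hφ2 hEφ
    have e1 : ∫ x, φ x ^ 2 ∂(dens p)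
        = a ^ 2 * (∫ x, f x ^ 2 ∂(dens p)) + 2 * (a * b) * (∫ x, f x * g x ∂(dens p))
          + b ^ 2 * (∫ x, g x ^ 2 ∂(dens p)) := by
      have iA : Integrable (fun x => a ^ 2 * f x ^ 2) (dens p) := hf2.const_mul _
      have iB : Integrable (fun x => 2 * (a * b) * (f x * g x)) (dens p) := hfg.const_mul _
      have iC : Integrable (fun x => b ^ 2 * g x ^ 2) (dens p) := hg2.const_mul _
      have iAB : Integrable (fun x => a ^ 2 * f x ^ 2 + 2 * (a * b) * (f x * g x)) (dens p) :=
        iA.add iB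
      rw [hφ2eq, integral_add iAB iC, integral_add iA iB, integral_const_mul,
        integral_const_mul, integral_const_mul]
    have e2 : ∫ x, φ x ∂(dens p)
        = a * (∫ x, f x ∂(dens p)) + b * (∫ x, g x ∂(dens p)) := by
      simp only [hφdef]
      rw [integral_add (hfint.const_mul _) (hgint.const_mul _), integral_const_mul,
        integral_const_mul]
    have e3 : ∫ x, Gamma1 p h x / h' x * (φ' x ^ 2) ∂(dens p)
        = a ^ 2 * (∫ x, Gamma1 p h x / h' x * (f' x ^ 2) ∂(dens p))
          + 2 * (a * b) * (∫ x, Gamma1 p h x / h' x * (f' x * g' x) ∂(dens p))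
          + b ^ 2 * (∫ x, Gamma1 p h x / h' x * (g' x ^ 2) ∂(dens p)) := by
      have iA : Integrable (fun x => a ^ 2 * (Gamma1 p h x / h' x * (f' x ^ 2))) (dens p) :=
        hE11.const_mul _
      have iB : Integrable (fun x => 2 * (a * b) * (Gamma1 p h x / h' x * (f' x * g' x)))
        (dens p) := hE12.const_mul _
      have iC : Integrable (fun x => b ^ 2 * (Gamma1 p h x / h' x * (g' x ^ 2))) (dens p) :=
        hE22.const_mul _
      have iAB : Integrable (fun x => a ^ 2 * (Gamma1 p h x / h' x * (f' x ^ 2))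
          + 2 * (a * b) * (Gamma1 p h x / h' x * (f' x * g' x))) (dens p) := iA.add iB
      rw [hEφeq, integral_add iAB iC, integral_add iA iB, integral_const_mul,
        integral_const_mul, integral_const_mul]
    rw [e1, e2, e3] at hmain
    exact hmain
  rw [Matrix.posSemidef_iff_dotProduct_mulVec]
  constructor
  · unfold Matrix.IsHermitian
    ext i j
    fin_cases i <;> fin_cases j <;>
      simp [Matrix.conjTranspose_apply, Matrix.sub_apply]
  · intro v
    have hkey := key (v 0) (v 1)
    simp only [Matrix.sub_mulVec, dotProduct, Matrix.mulVec, dotProduct,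
      Fin.sum_univ_two, Matrix.sub_apply, Matrix.cons_val', Matrix.cons_val_zero,
      Matrix.cons_val_one, Matrix.head_cons, Matrix.empty_val', Matrix.cons_val_fin_one,
      Matrix.head_fin_const, Pi.star_apply, star_trivial, Pi.sub_apply, Matrix.of_apply]
    nlinarith [hkey]
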